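/- arXiv:1906.02313 — 6 statements merged into one kernel-verified Lean document; each statement's English description precedes it below -/
import Mathlib

section
/- If U is a regular subsemigroup of a semigroup S, then Green's relation L on U equals the restriction to U of Green's relation L on S, and Green's relation H on U equals the restriction to U of Green's relation H on S. -/
/-- `x ≤_R y` in a semigroup: `x ∈ yS¹`. -/
def leR {S : Type*} [Semigroup S] (x y : S) : Prop := x = y ∨ ∃ t, x = y * t

/-- `x ≤_L y` in a semigroup: `x ∈ S¹y`. -/
def leL {S : Type*} [Semigroup S] (x y : S) : Prop := x = y ∨ ∃ t, x = t * y

/-- `x ≤_J y` in a semigroup: `x ∈ S¹yS¹`. -/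
def leJ {S : Type*} [Semigroup S] (x y : S) : Prop :=
  x = y ∨ (∃ t, x = y * t) ∨ (∃ t, x = t * y) ∨ ∃ t u, x = t * y * u

/-- Green's relation `R`: `xS¹ = yS¹`. -/
def GreenR {S : Type*} [Semigroup S] (x y : S) : Prop := leR x y ∧ leR y x

/-- Green's relation `L`: `S¹x = S¹y`. -/
def GreenL {S : Type*} [Semigroup S] (x y : S) : Prop := leL x y ∧ leL y x

/-- Green's relation `J`: `S¹xS¹ = S¹yS¹`. -/
def GreenJ {S : Type*} [Semigroup S] (x y : S) : Prop := leJ x y ∧ leJ y x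

/-- Green's relation `H = R ∩ L`. -/
def GreenH {S : Type*} [Semigroup S] (x y : S) : Prop := GreenR x y ∧ GreenL x y

/-- Green's relation `D = R ∘ L`. -/
def GreenD {S : Type*} [Semigroup S] (x y : S) : Prop := ∃ z, GreenR x z ∧ GreenL z y


lemma leL_of_coe {S : Type*} [Semigroup S] {U : Subsemigroup S}
    (hreg : ∀ y : U, ∃ z : U, y = y * z * y) {x y : U}
    (h : leL (x : S) (y : S)) : leL x y := by
  rcases h with h | ⟨t, ht⟩
  · exact Or.inl (Subtype.ext h)
  · obtain ⟨w, hw⟩ := hreg y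
    refine Or.inr ⟨x * w, Subtype.ext ?_⟩
    have hw' : (y : S) = (y : S) * w * y := congrArg Subtype.val hw
    push_cast
    calc (x : S) = t * y := ht
    _ = t * ((y : S) * w * y) := by rw [← hw']
    _ = (t * (y : S)) * w * y := by simp [mul_assoc]
    _ = (x : S) * w * y := by rw [← ht]

lemma leR_of_coe {S : Type*} [Semigroup S] {U : Subsemigroup S}
    (hreg : ∀ y : U, ∃ z : U, y = y * z * y) {x y : U}
    (h : leR (x : S) (y : S)) : leR x y := by
  rcases h with h | ⟨t, ht⟩
  · exact Or.inl (Subtype.ext h)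
  · obtain ⟨w, hw⟩ := hreg y
    refine Or.inr ⟨w * x, Subtype.ext ?_⟩
    have hw' : (y : S) = (y : S) * w * y := congrArg Subtype.val hw
    push_cast
    calc (x : S) = y * t := ht
    _ = ((y : S) * w * y) * t := by rw [← hw']
    _ = (y : S) * (w * ((y:S) * t)) := by simp [mul_assoc]
    _ = (y : S) * (w * x) := by rw [← ht]

lemma leL_coe {S : Type*} [Semigroup S] {U : Subsemigroup S} {x y : U}
    (h : leL x y) : leL (x : S) (y : S) := by
  rcases h with h | ⟨t, ht⟩
  · exact Or.inl (congrArg Subtype.val h)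
  · exact Or.inr ⟨t, congrArg Subtype.val ht⟩

lemma leR_coe {S : Type*} [Semigroup S] {U : Subsemigroup S} {x y : U}
    (h : leR x y) : leR (x : S) (y : S) := by
  rcases h with h | ⟨t, ht⟩
  · exact Or.inl (congrArg Subtype.val h)
  · exact Or.inr ⟨t, congrArg Subtype.val ht⟩

/-- If `U` is a regular subsemigroup of `S`, then Green's `L` (resp. `H`) on `U`
is the restriction to `U` of Green's `L` (resp. `H`) on `S`. -/
theorem stmt_2 {S : Type*} [Semigroup S] (U : Subsemigroup S)
    (hreg : ∀ y : U, ∃ z : U, y = y * z * y) :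
    (∀ x y : U, GreenL x y ↔ GreenL (x : S) (y : S)) ∧
    (∀ x y : U, GreenH x y ↔ GreenH (x : S) (y : S)) := by
  constructor
  · intro x y
    exact ⟨fun ⟨h1, h2⟩ => ⟨leL_coe h1, leL_coe h2⟩,
      fun ⟨h1, h2⟩ => ⟨leL_of_coe hreg h1, leL_of_coe hreg h2⟩⟩
  · intro x y
    exact ⟨fun ⟨⟨r1, r2⟩, ⟨l1, l2⟩⟩ => ⟨⟨leR_coe r1, leR_coe r2⟩, ⟨leL_coe l1, leL_coe l2⟩⟩,
      fun ⟨⟨r1, r2⟩, ⟨l1, l2⟩⟩ => ⟨⟨leR_of_coe hreg r1, leR_of_coe hreg r2⟩,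
        ⟨leL_of_coe hreg l1, leL_of_coe hreg l2⟩⟩⟩
end

section
/- Every group-bound semigroup is stable. -/
/-- `spow x k = x ^ (k + 1)` in a semigroup. -/
def spow {S : Type*} [Semigroup S] (x : S) : ℕ → S
  | 0 => x
  | n + 1 => spow x n * x

section Aux
variable {S : Type*} [Semigroup S]

lemma spow_succ' (x : S) (n : ℕ) : spow x (n + 1) = x * spow x n := by
  induction n with
  | zero => rfl
  | succ n ih =>
    show spow x (n + 1) * x = x * (spow x n * x)
    rw [ih, mul_assoc]

lemma spow_add (x : S) (m n : ℕ) : spow x m * spow x n = spow x (m + n + 1) := by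
  induction n with
  | zero => rfl
  | succ n ih =>
    show spow x m * (spow x n * x) = spow x (m + n + 1) * x
    rw [← mul_assoc, ih]

lemma iter_mid {a b x : S} (h : x = a * x * b) :
    ∀ n, x = spow a n * x * spow b n := by
  intro n
  induction n with
  | zero => exact h
  | succ n ih =>
    calc x = a * x * b := h
    _ = a * (spow a n * x * spow b n) * b := by rw [← ih]
    _ = (a * spow a n) * x * (spow b n * b) := by simp only [mul_assoc]
    _ = spow a (n + 1) * x * spow b (n + 1) := by rw [← spow_succ' a n]; rfl

lemma right_key (hgb : ∀ x : S, ∃ k : ℕ, GreenH (spow x k) (spow x (2 * k + 1)))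
    {a b x : S} (h : x = a * x * b) : x = x * b ∨ ∃ w, x = x * b * w := by
  obtain ⟨k, hH⟩ := hgb b
  have hsq : spow b (2 * k + 1) = spow b k * spow b k := by
    rw [spow_add]; ring_nf
  have hit : x = spow a k * x * spow b k := iter_mid h k
  have key : x = x * spow b k ∨ ∃ c, x = x * spow b k * c := by
    rcases hH.1.1 with heq | ⟨c, hc⟩
    · left
      rw [hsq] at heq
      calc x = spow a k * x * spow b k := hit
      _ = spow a k * x * (spow b k * spow b k) := by rw [← heq]
      _ = (spow a k * x * spow b k) * spow b k := by simp only [mul_assoc]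
      _ = x * spow b k := by rw [← hit]
    · right
      refine ⟨c, ?_⟩
      rw [hsq] at hc
      calc x = spow a k * x * spow b k := hit
      _ = spow a k * x * (spow b k * spow b k * c) := by rw [← hc]
      _ = (spow a k * x * spow b k) * (spow b k * c) := by simp only [mul_assoc]
      _ = x * (spow b k * c) := by rw [← hit]
      _ = x * spow b k * c := by rw [mul_assoc]
  cases k with
  | zero => exact key
  | succ m =>
    rw [spow_succ' b m] at key
    rcases key with h1 | ⟨c, h1⟩
    · right; exact ⟨spow b m, by rw [← mul_assoc] at h1; exact h1⟩
    · right; exact ⟨spow b m * c, by simp only [mul_assoc] at h1 ⊢; exact h1⟩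

lemma left_key (hgb : ∀ x : S, ∃ k : ℕ, GreenH (spow x k) (spow x (2 * k + 1)))
    {a b x : S} (h : x = a * x * b) : x = a * x ∨ ∃ w, x = w * (a * x) := by
  obtain ⟨k, hH⟩ := hgb a
  have hsq : spow a (2 * k + 1) = spow a k * spow a k := by
    rw [spow_add]; ring_nf
  have hit : x = spow a k * x * spow b k := iter_mid h k
  have key : x = spow a k * x ∨ ∃ c, x = c * (spow a k * x) := by
    rcases hH.2.1 with heq | ⟨c, hc⟩
    · left
      rw [hsq] at heq
      calc x = spow a k * x * spow b k := hit
      _ = spow a k * spow a k * x * spow b k := by rw [← heq]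
      _ = spow a k * (spow a k * x * spow b k) := by simp only [mul_assoc]
      _ = spow a k * x := by rw [← hit]
    · right
      refine ⟨c, ?_⟩
      rw [hsq] at hc
      calc x = spow a k * x * spow b k := hit
      _ = c * (spow a k * spow a k) * x * spow b k := by rw [← hc]
      _ = c * (spow a k * (spow a k * x * spow b k)) := by simp only [mul_assoc]
      _ = c * (spow a k * x) := by rw [← hit]
  cases k with
  | zero => exact key
  | succ m =>
    have hs : spow a (m + 1) = spow a m * a := rfl
    rw [hs] at key
    rcases key with h1 | ⟨c, h1⟩
    · right; exact ⟨spow a m, by rw [mul_assoc] at h1; exact h1⟩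
    · right; exact ⟨c * spow a m, by simp only [mul_assoc] at h1 ⊢; exact h1⟩

end Aux

/-- Every group-bound semigroup is stable: if for every `x` some `x^k` is
`H`-related to `x^(2k)`, then `x J xy → x R xy` and `x J yx → x L yx`. -/
theorem stmt_4 {S : Type*} [Semigroup S]
    (hgb : ∀ x : S, ∃ k : ℕ, GreenH (spow x k) (spow x (2 * k + 1))) :
    ∀ x y : S, (GreenJ x (x * y) → GreenR x (x * y)) ∧
      (GreenJ x (y * x) → GreenL x (y * x)) := by
  intro x y
  constructor
  · rintro ⟨hx, -⟩
    refine ⟨?_, Or.inr ⟨y, rfl⟩⟩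
    rcases hx with h | ⟨t, ht⟩ | ⟨t, ht⟩ | ⟨t, u, ht⟩
    · exact Or.inl h
    · exact Or.inr ⟨t, ht⟩
    · -- x = t * (x * y)
      have h' : x = t * x * y := by rw [mul_assoc]; exact ht
      rcases right_key hgb h' with h1 | ⟨w, h1⟩
      · exact Or.inl h1
      · exact Or.inr ⟨w, h1⟩
    · -- x = t * (x * y) * u
      have h' : x = t * x * (y * u) := by
        simp only [mul_assoc] at ht ⊢; exact ht
      rcases right_key hgb h' with h1 | ⟨w, h1⟩
      · exact Or.inr ⟨u, by rw [← mul_assoc] at h1; exact h1⟩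
      · exact Or.inr ⟨u * w, by simp only [mul_assoc] at h1 ⊢; exact h1⟩
  · rintro ⟨hx, -⟩
    refine ⟨?_, Or.inr ⟨y, rfl⟩⟩
    rcases hx with h | ⟨t, ht⟩ | ⟨t, ht⟩ | ⟨t, u, ht⟩
    · exact Or.inl h
    · -- x = (y * x) * t
      have h' : x = y * x * t := ht
      rcases left_key hgb h' with h1 | ⟨w, h1⟩
      · exact Or.inl h1
      · exact Or.inr ⟨w, h1⟩
    · exact Or.inr ⟨t, ht⟩
    · -- x = t * (y * x) * u
      have h' : x = (t * y) * x * u := by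
        simp only [mul_assoc] at ht ⊢; exact ht
      rcases left_key hgb h' with h1 | ⟨w, h1⟩
      · exact Or.inr ⟨t, by rw [mul_assoc] at h1; exact h1⟩
      · exact Or.inr ⟨w * t, by simp only [mul_assoc] at h1 ⊢; exact h1⟩
end

section
/- Let S be a semigroup, U a subsemigroup with the property that Green's L and R relations on U are the restrictions of those on S. Let x, y ∈ U with y stable in S. If x J y in S and x ≤_J y in U, then x D y in U. -/
private lemma leJ_trans {S : Type*} [Semigroup S] {a b c : S}
    (h1 : leJ a b) (h2 : leJ b c) : leJ a c := by
  rcases h1 with rfl | ⟨t, rfl⟩ | ⟨t, rfl⟩ | ⟨t, u, rfl⟩ <;>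
    rcases h2 with rfl | ⟨s, rfl⟩ | ⟨s, rfl⟩ | ⟨s, v, rfl⟩ <;> unfold leJ
  · tauto
  · exact Or.inr (Or.inl ⟨s, rfl⟩)
  · exact Or.inr (Or.inr (Or.inl ⟨s, rfl⟩))
  · exact Or.inr (Or.inr (Or.inr ⟨s, v, rfl⟩))
  · exact Or.inr (Or.inl ⟨t, rfl⟩)
  · exact Or.inr (Or.inl ⟨s * t, by simp [mul_assoc]⟩)
  · exact Or.inr (Or.inr (Or.inr ⟨s, t, rfl⟩))
  · exact Or.inr (Or.inr (Or.inr ⟨s, v * t, by simp [mul_assoc]⟩))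
  · exact Or.inr (Or.inr (Or.inl ⟨t, rfl⟩))
  · exact Or.inr (Or.inr (Or.inr ⟨t, s, by simp [mul_assoc]⟩))
  · exact Or.inr (Or.inr (Or.inl ⟨t * s, by simp [mul_assoc]⟩))
  · exact Or.inr (Or.inr (Or.inr ⟨t * s, v, by simp [mul_assoc]⟩))
  · exact Or.inr (Or.inr (Or.inr ⟨t, u, rfl⟩))
  · exact Or.inr (Or.inr (Or.inr ⟨t, s * u, by simp [mul_assoc]⟩))
  · exact Or.inr (Or.inr (Or.inr ⟨t * s, u, by simp [mul_assoc]⟩))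
  · exact Or.inr (Or.inr (Or.inr ⟨t * s, v * u, by simp [mul_assoc]⟩))

/-- Let `U` be a subsemigroup of `S` on which Green's `L` and `R` relations are
the restrictions of those of `S`, and let `x, y ∈ U` with `y` stable in `S`.
If `x J y` in `S` and `x ≤_J y` in `U`, then `x D y` in `U`. -/
theorem stmt_7 {S : Type*} [Semigroup S] (U : Subsemigroup S)
    (hL : ∀ u v : U, GreenL u v ↔ GreenL (u : S) (v : S))
    (hR : ∀ u v : U, GreenR u v ↔ GreenR (u : S) (v : S))
    (x y : U)
    (hstab : ∀ a : S, (GreenJ (y : S) ((y : S) * a) → GreenR (y : S) ((y : S) * a)) ∧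
      (GreenJ (y : S) (a * (y : S)) → GreenL (y : S) (a * (y : S))))
    (hJ : GreenJ (x : S) (y : S)) (hle : leJ x y) :
    GreenD x y := by
  rcases hle with rfl | ⟨t, rfl⟩ | ⟨t, rfl⟩ | ⟨t, u, rfl⟩
  · exact ⟨x, ⟨Or.inl rfl, Or.inl rfl⟩, ⟨Or.inl rfl, Or.inl rfl⟩⟩
  · -- x = y * t : y R x in S by stability
    have hJS : GreenJ (y : S) ((y : S) * (t : S)) :=
      ⟨hJ.2, Or.inr (Or.inl ⟨t, rfl⟩)⟩
    have hRS : GreenR (y : S) ((y : S) * (t : S)) := (hstab t).1 hJS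
    have : GreenR (y * t) y := (hR _ _).2 ⟨hRS.2, hRS.1⟩
    exact ⟨y, this, ⟨Or.inl rfl, Or.inl rfl⟩⟩
  · have hJS : GreenJ (y : S) ((t : S) * (y : S)) :=
      ⟨hJ.2, Or.inr (Or.inr (Or.inl ⟨t, rfl⟩))⟩
    have hLS : GreenL (y : S) ((t : S) * (y : S)) := (hstab t).2 hJS
    exact ⟨t * y, ⟨Or.inl rfl, Or.inl rfl⟩, (hL _ _).2 ⟨hLS.2, hLS.1⟩⟩
  · -- x = t * y * u
    have hty : leJ (y : S) ((t : S) * (y : S)) :=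
      leJ_trans hJ.2 (Or.inr (Or.inl ⟨u, rfl⟩))
    have hyu : leJ (y : S) ((y : S) * (u : S)) :=
      leJ_trans hJ.2 (by exact Or.inr (Or.inr (Or.inl ⟨t, mul_assoc (t:S) (y:S) (u:S)⟩)))
    have hLS : GreenL (y : S) ((t : S) * (y : S)) :=
      (hstab t).2 ⟨hty, Or.inr (Or.inr (Or.inl ⟨t, rfl⟩))⟩
    have hRS : GreenR (y : S) ((y : S) * (u : S)) :=
      (hstab u).1 ⟨hyu, Or.inr (Or.inl ⟨u, rfl⟩)⟩
    have hRx : GreenR ((t : S) * (y : S) * (u : S)) ((t : S) * (y : S)) := by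
      constructor
      · exact Or.inr ⟨u, rfl⟩
      · rcases hRS.1 with h | ⟨c, h⟩
        · exact Or.inl (by rw [mul_assoc, ← h])
        · refine Or.inr ⟨c, ?_⟩
          conv_lhs => rw [h]
          simp [mul_assoc]
    refine ⟨t * y, (hR _ _).2 ?_, (hL _ _).2 ⟨hLS.2, hLS.1⟩⟩
    exact hRx
end

section
/- If U is a regular subsemigroup of a right-stable semigroup S, then U is right-stable. -/
/-- If `U` is a regular subsemigroup of a right-stable semigroup `S`, then `U`
is right-stable. -/
theorem stmt_9 {S : Type*} [Semigroup S] (U : Subsemigroup S)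
    (hreg : ∀ y : U, ∃ z : U, y = y * z * y)
    (hrs : ∀ x y : S, GreenJ x (x * y) → GreenR x (x * y)) :
    ∀ x y : U, GreenJ x (x * y) → GreenR x (x * y) := by
  intro x y hJ
  -- push the J-relation from U to S
  have coeJ : ∀ a b : U, leJ a b → leJ (a : S) (b : S) := by
    rintro a b (h | ⟨t, h⟩ | ⟨t, h⟩ | ⟨t, u, h⟩)
    · exact Or.inl (congrArg _ h)
    · exact Or.inr (Or.inl ⟨t, congrArg _ h⟩)
    · exact Or.inr (Or.inr (Or.inl ⟨t, congrArg _ h⟩))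
    · exact Or.inr (Or.inr (Or.inr ⟨t, u, congrArg _ h⟩))
  have hJS : GreenJ (x : S) ((x : S) * (y : S)) :=
    ⟨coeJ _ _ hJ.1, coeJ _ _ hJ.2⟩
  have hRS := hrs (x : S) (y : S) hJS
  have hba : leR (x * y) x := Or.inr ⟨y, rfl⟩
  rcases hRS.1 with h | ⟨t, h⟩
  · have hx : x = x * y := Subtype.ext h
    exact ⟨Or.inl hx, Or.inl hx.symm⟩
  · obtain ⟨z, hz⟩ := hreg (x * y)
    refine ⟨Or.inr ⟨z * x, Subtype.ext ?_⟩, hba⟩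
    have hzS : ((x * y : U) : S) = ((x * y : U) : S) * (z : S) * ((x * y : U) : S) := by
      exact_mod_cast congrArg (Subtype.val) hz
    calc (x : S) = ((x : S) * y) * t := h
      _ = (((x * y : U) : S) * (z : S) * ((x * y : U) : S)) * t := by
          rw [← hzS]; rfl
      _ = ((x : S) * y) * ((z : S) * ((x : S) * y * t)) := by
          push_cast; simp [mul_assoc]
      _ = ((x : S) * y) * ((z : S) * (x : S)) := by rw [← h]
      _ = ((x * y * (z * x) : U) : S) := by push_cast; simp [mul_assoc]
end

section
/- If U is a regular subsemigroup of a left-stable semigroup S, then U is left-stable. -/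
/-- If `U` is a regular subsemigroup of a left-stable semigroup `S`, then `U`
is left-stable. -/
theorem stmt_10 {S : Type*} [Semigroup S] (U : Subsemigroup S)
    (hreg : ∀ y : U, ∃ z : U, y = y * z * y)
    (hls : ∀ x y : S, GreenJ x (y * x) → GreenL x (y * x)) :
    ∀ x y : U, GreenJ x (y * x) → GreenL x (y * x) := by
  intro x y hJ
  -- transfer leJ from U to S
  have coeJ : ∀ a b : U, leJ a b → leJ (a : S) (b : S) := by
    intro a b h
    rcases h with h | ⟨t, h⟩ | ⟨t, h⟩ | ⟨t, u, h⟩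
    · exact Or.inl (by exact_mod_cast Subtype.ext_iff.mp h)
    · exact Or.inr (Or.inl ⟨t, by exact_mod_cast Subtype.ext_iff.mp h⟩)
    · exact Or.inr (Or.inr (Or.inl ⟨t, by exact_mod_cast Subtype.ext_iff.mp h⟩))
    · exact Or.inr (Or.inr (Or.inr ⟨t, u, by exact_mod_cast Subtype.ext_iff.mp h⟩))
  have hJS : GreenJ (x : S) ((y : S) * (x : S)) := by
    refine ⟨?_, ?_⟩
    · have := coeJ _ _ hJ.1
      simpa using this
    · have := coeJ _ _ hJ.2
      simpa using this
  have hLS : GreenL (x : S) ((y : S) * (x : S)) := hls _ _ hJS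
  set b : U := y * x with hb
  obtain ⟨b', hb'⟩ := hreg b
  constructor
  · -- x ≤_L b in U
    rcases hLS.1 with h | ⟨s, h⟩
    · left
      exact Subtype.ext (by simpa [hb] using h)
    · right
      refine ⟨x * b', ?_⟩
      apply Subtype.ext
      have hbS : (b : S) = (b : S) * (b' : S) * (b : S) := by exact_mod_cast Subtype.ext_iff.mp hb'
      have hxS : (x : S) = s * (b : S) := by simpa [hb] using h
      push_cast [hb]
      calc (x : S) = s * (b : S) := hxS
        _ = s * ((b : S) * (b' : S) * (b : S)) := by rw [← hbS]
        _ = (s * (b : S)) * (b' : S) * (b : S) := by simp [mul_assoc]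
        _ = (x : S) * (b' : S) * (b : S) := by rw [← hxS]
        _ = (x : S) * (b' : S) * ((y : S) * (x : S)) := by rw [hb]; push_cast; ring_nf
  · -- b ≤_L x in U : b = y * x
    right
    exact ⟨y, rfl⟩
end

section
/- Let U be a right-simple semigroup that embeds in a left-stable semigroup S. Then U is left-cancellative. -/
/-- If a right-simple semigroup `U` embeds in a left-stable semigroup `S`,
then `U` is left-cancellative. -/
theorem stmt_12 {U S : Type*} [Semigroup U] [Semigroup S]
    (φ : U →ₙ* S) (hφ : Function.Injective φ)
    (hrs : ∀ x u : U, ∃ t : U, x * t = u)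
    (hls : ∀ x y : S, GreenJ x (y * x) → GreenL x (y * x)) :
    ∀ a b c : U, a * b = a * c → b = c := by
  intro a b c h
  obtain ⟨t, ht⟩ := hrs b c
  obtain ⟨w, hw⟩ := hrs (a * b) b
  have hbw : φ b = (φ a * φ b) * φ w := by
    rw [← map_mul, ← map_mul, hw]
  have hJ : GreenJ (φ b) (φ a * φ b) := by
    constructor
    · exact Or.inr (Or.inl ⟨φ w, hbw⟩)
    · exact Or.inr (Or.inr (Or.inl ⟨φ a, rfl⟩))
  have hL := (hls (φ b) (φ a) hJ).1
  have hab : φ a * φ b = φ a * φ c := by rw [← map_mul, ← map_mul, h]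
  have hct : φ c = φ b * φ t := by rw [← map_mul, ht]
  apply hφ
  rcases hL with h1 | ⟨s, h1⟩
  · calc φ b = φ a * φ b := h1
      _ = φ a * φ c := hab
      _ = φ a * (φ b * φ t) := by rw [hct]
      _ = (φ a * φ b) * φ t := by rw [mul_assoc]
      _ = φ b * φ t := by rw [← h1]
      _ = φ c := hct.symm
  · calc φ b = s * (φ a * φ b) := h1
      _ = s * (φ a * φ c) := by rw [hab]
      _ = s * (φ a * (φ b * φ t)) := by rw [hct]
      _ = (s * (φ a * φ b)) * φ t := by simp [mul_assoc]
      _ = φ b * φ t := by rw [← h1]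
      _ = φ c := hct.symm
end
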